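/- Let μ be the standard Gaussian measure (covariance I) on ℝ^Γ (product of standard one-dimensional Gaussians). For any κ > 0 and ε > 0, there is p(κ,ε) > 0 such that for every self-adjoint trace class operator M with ‖M‖₁ ≤ κ, μ({x : |(x,Mx) − tr(M)| < ε}) ≥ p(κ,ε). -/

import Mathlib

open MeasureTheory ProbabilityTheory Real Set
open scoped ENNReal NNReal

set_option linter.unusedSectionVars false

section Stmt14Aux


lemma integrable_pow_gauss_vol (n : ℕ) :
    Integrable (fun x : ℝ => x ^ n * rexp (-(1/2) * x ^ 2)) := by
  have h := integrable_rpow_mul_exp_neg_mul_sq (b := 1/2) (by norm_num)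
    (s := (n : ℝ)) (by exact lt_of_lt_of_le neg_one_lt_zero (Nat.cast_nonneg n))
  simpa [Real.rpow_natCast] using h

lemma Ioi_moment (n : ℕ) :
    ∫ x in Ioi (0:ℝ), x ^ n * rexp (-(1/2) * x ^ 2)
      = ((1:ℝ)/2) ^ (-((n : ℝ) + 1)/2) * (1/2) * Real.Gamma (((n : ℝ) + 1)/2) := by
  have h := integral_rpow_mul_exp_neg_mul_rpow (p := 2) (q := (n : ℝ)) (b := 1/2)
    (by norm_num) (by exact lt_of_lt_of_le neg_one_lt_zero (Nat.cast_nonneg n)) (by norm_num)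
  simpa [Real.rpow_natCast, Real.rpow_two, neg_div] using h

lemma whole_moment (n : ℕ) (hn : Even n) :
    ∫ x : ℝ, x ^ n * rexp (-(1/2) * x ^ 2)
      = 2 * (((1:ℝ)/2) ^ (-((n : ℝ) + 1)/2) * (1/2) * Real.Gamma (((n : ℝ) + 1)/2)) := by
  have h1 : ∫ x : ℝ, x ^ n * rexp (-(1/2) * x ^ 2)
      = ∫ x : ℝ, (fun t : ℝ => t ^ n * rexp (-(1/2) * t ^ 2)) |x| := by
    congr 1; ext x; simp [hn.pow_abs, sq_abs]
  rw [h1, integral_comp_abs (f := fun t : ℝ => t ^ n * rexp (-(1/2) * t ^ 2)), Ioi_moment]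

lemma gamma32 : Real.Gamma ((3:ℝ)/2) = √π / 2 := by
  have h := Real.Gamma_add_one (s := 1/2) (by norm_num)
  rw [Real.Gamma_one_half_eq] at h
  rw [show (3:ℝ)/2 = 1/2 + 1 by norm_num, h]
  ring

lemma gamma52 : Real.Gamma ((5:ℝ)/2) = 3 * √π / 4 := by
  have h := Real.Gamma_add_one (s := 3/2) (by norm_num)
  rw [show (3:ℝ)/2 + 1 = 5/2 by norm_num] at h
  rw [h, gamma32]
  ring

lemma half_rpow (y : ℝ) : ((1:ℝ)/2) ^ (-y) = (2:ℝ) ^ y := by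
  rw [one_div, Real.inv_rpow (by norm_num), Real.rpow_neg (by norm_num), inv_inv]

lemma two_rpow_32 : (2:ℝ) ^ ((3:ℝ)/2) = 2 * √2 := by
  rw [show (3:ℝ)/2 = 1 + 1/2 by norm_num, Real.rpow_add (by norm_num), Real.rpow_one,
    ← Real.sqrt_eq_rpow]

lemma two_rpow_52 : (2:ℝ) ^ ((5:ℝ)/2) = 4 * √2 := by
  rw [show (5:ℝ)/2 = 2 + 1/2 by norm_num, Real.rpow_add (by norm_num),
    ← Real.sqrt_eq_rpow, Real.rpow_two]
  norm_num

lemma I2 : ∫ x : ℝ, x ^ 2 * rexp (-(1/2) * x ^ 2) = √2 * √π := by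
  rw [whole_moment 2 ⟨1, rfl⟩]
  norm_num
  rw [half_rpow, two_rpow_32, gamma32]
  ring

lemma I4 : ∫ x : ℝ, x ^ 4 * rexp (-(1/2) * x ^ 2) = 3 * (√2 * √π) := by
  rw [whole_moment 4 ⟨2, rfl⟩]
  norm_num
  rw [half_rpow, two_rpow_52, gamma52]
  ring

lemma I0 : ∫ x : ℝ, rexp (-(1/2) * x ^ 2) = √2 * √π := by
  have h := integral_gaussian (1/2)
  rw [show π / (1/2) = 2 * π by ring] at h
  rw [show (fun x : ℝ => rexp (-(1/2) * x ^ 2)) = fun x : ℝ => rexp (-(1/2 : ℝ) * x ^ 2) from rfl]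
  simpa [Real.sqrt_mul (by norm_num : (0:ℝ) ≤ 2)] using h



lemma pdf01 : gaussianPDFReal 0 1
    = fun x => (√2 * √π)⁻¹ * rexp (-(1/2) * x ^ 2) := by
  ext x
  rw [gaussianPDFReal]
  push_cast
  rw [show (2 * π * 1 : ℝ) = 2 * π by ring, Real.sqrt_mul (by norm_num : (0:ℝ) ≤ 2)]
  congr 1
  ring

lemma integral_gauss_eq (g : ℝ → ℝ) :
    ∫ x, g x ∂(gaussianReal 0 1) = ∫ x, gaussianPDFReal 0 1 x * g x := by
  rw [gaussianReal_of_var_ne_zero 0 one_ne_zero]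
  have hm : Measurable (fun x => (gaussianPDFReal 0 1 x).toNNReal) :=
    (measurable_gaussianPDFReal 0 1).real_toNNReal
  have h1 : (volume : Measure ℝ).withDensity (gaussianPDF 0 1)
      = (volume : Measure ℝ).withDensity
          (fun x => ((gaussianPDFReal 0 1 x).toNNReal : ℝ≥0∞)) := rfl
  rw [h1, integral_withDensity_eq_integral_smul hm g]
  congr 1
  ext x
  rw [NNReal.smul_def, Real.coe_toNNReal _ (gaussianPDFReal_nonneg _ _ _), smul_eq_mul]

lemma integrable_gauss_iff (g : ℝ → ℝ) :
    Integrable g (gaussianReal 0 1)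
      ↔ Integrable (fun x => gaussianPDFReal 0 1 x * g x) := by
  rw [gaussianReal_of_var_ne_zero 0 one_ne_zero]
  have hm : Measurable (fun x => (gaussianPDFReal 0 1 x).toNNReal) :=
    (measurable_gaussianPDFReal 0 1).real_toNNReal
  have h1 : (volume : Measure ℝ).withDensity (gaussianPDF 0 1)
      = (volume : Measure ℝ).withDensity
          (fun x => ((gaussianPDFReal 0 1 x).toNNReal : ℝ≥0∞)) := rfl
  rw [h1, integrable_withDensity_iff_integrable_smul hm]
  constructor <;> intro h <;> refine h.congr (Filter.Eventually.of_forall fun x => ?_) <;>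
    simp only [NNReal.smul_def, smul_eq_mul,
      Real.coe_toNNReal _ (gaussianPDFReal_nonneg 0 1 x)]

lemma integrable_pow_gauss (n : ℕ) :
    Integrable (fun x : ℝ => x ^ n) (gaussianReal 0 1) := by
  rw [integrable_gauss_iff]
  have : (fun x => gaussianPDFReal 0 1 x * x ^ n)
      = fun x => (√2 * √π)⁻¹ * (x ^ n * rexp (-(1/2) * x ^ 2)) := by
    ext x; rw [pdf01]; ring
  rw [this]
  exact (integrable_pow_gauss_vol n).const_mul _

lemma sqrt2pi_ne : (√2 * √π : ℝ) ≠ 0 := by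
  have h2 : (0:ℝ) < √2 := Real.sqrt_pos.mpr (by norm_num)
  have hp : (0:ℝ) < √π := Real.sqrt_pos.mpr Real.pi_pos
  positivity

lemma moment2 : ∫ x, x ^ 2 ∂(gaussianReal 0 1) = 1 := by
  rw [integral_gauss_eq]
  have : (fun x => gaussianPDFReal 0 1 x * x ^ 2)
      = fun x => (√2 * √π)⁻¹ * (x ^ 2 * rexp (-(1/2) * x ^ 2)) := by
    ext x; rw [pdf01]; ring
  rw [this, integral_const_mul, I2, inv_mul_cancel₀ sqrt2pi_ne]

lemma moment4 : ∫ x, x ^ 4 ∂(gaussianReal 0 1) = 3 := by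
  rw [integral_gauss_eq]
  have : (fun x => gaussianPDFReal 0 1 x * x ^ 4)
      = fun x => (√2 * √π)⁻¹ * (x ^ 4 * rexp (-(1/2) * x ^ 2)) := by
    ext x; rw [pdf01]; ring
  rw [this, integral_const_mul, I4]
  rw [show (√2 * √π)⁻¹ * (3 * (√2 * √π)) = 3 * ((√2 * √π)⁻¹ * (√2 * √π)) by ring,
    inv_mul_cancel₀ sqrt2pi_ne, mul_one]

lemma integral_sqm1 : ∫ x, (x ^ 2 - 1) ∂(gaussianReal 0 1) = 0 := by
  rw [integral_sub (integrable_pow_gauss 2) (integrable_const 1), moment2]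
  simp

lemma integrable_21 :
    Integrable (fun x : ℝ => 2 * x ^ 2 - 1) (gaussianReal 0 1) := by
  have h := ((integrable_pow_gauss 2).const_mul 2).sub (integrable_const (1:ℝ))
  exact h

lemma integrable_sqm1_sq :
    Integrable (fun x : ℝ => (x ^ 2 - 1) ^ 2) (gaussianReal 0 1) := by
  have h : (fun x : ℝ => (x ^ 2 - 1) ^ 2)
      = fun x : ℝ => x ^ 4 - (2 * x ^ 2 - 1) := by ext x; ring
  rw [h]
  exact (integrable_pow_gauss 4).sub integrable_21

lemma integral_sqm1_sq : ∫ x, (x ^ 2 - 1) ^ 2 ∂(gaussianReal 0 1) = 2 := by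
  have h : (fun x : ℝ => (x ^ 2 - 1) ^ 2)
      = fun x : ℝ => x ^ 4 - (2 * x ^ 2 - 1) := by ext x; ring
  rw [h, integral_sub (integrable_pow_gauss 4) integrable_21,
    integral_sub ((integrable_pow_gauss 2).const_mul 2) (integrable_const 1),
    integral_const_mul, moment2, moment4]
  norm_num

lemma memLp_sqm1 : MemLp (fun x : ℝ => x ^ 2 - 1) 2 (gaussianReal 0 1) := by
  refine (memLp_two_iff_integrable_sq ?_).mpr integrable_sqm1_sq
  exact (((measurable_id.pow_const 2).sub measurable_const)).aestronglyMeasurable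



section RV
variable {Ω : Type*} [MeasurableSpace Ω] (P : Measure Ω) [IsProbabilityMeasure P]
  {X : Ω → ℝ}


lemma memLp_comp (hm : Measurable X) (hg : P.map X = gaussianReal 0 1) : MemLp (fun ω => (X ω) ^ 2 - 1) 2 P := by
  have h := (memLp_map_measure_iff
    (g := fun x : ℝ => x ^ 2 - 1) (f := X) (p := 2)
    (by rw [hg]; exact (((measurable_id.pow_const 2).sub measurable_const)).aestronglyMeasurable)
    hm.aemeasurable).mp (by rw [hg]; exact memLp_sqm1)
  exact h

lemma integral_comp_eq (hm : Measurable X) (hg : P.map X = gaussianReal 0 1) (f : ℝ → ℝ) (hf : Measurable f) :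
    ∫ ω, f (X ω) ∂P = ∫ x, f x ∂(gaussianReal 0 1) := by
  rw [← hg, integral_map hm.aemeasurable (by rw [hg]; exact hf.aestronglyMeasurable)]

lemma E_comp_zero (hm : Measurable X) (hg : P.map X = gaussianReal 0 1) : ∫ ω, ((X ω) ^ 2 - 1) ∂P = 0 := by
  rw [integral_comp_eq P hm hg (fun x => x ^ 2 - 1)
    ((measurable_id.pow_const 2).sub measurable_const)]
  exact integral_sqm1

lemma var_comp (hm : Measurable X) (hg : P.map X = gaussianReal 0 1) : variance (fun ω => (X ω) ^ 2 - 1) P = 2 := by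
  rw [variance_eq_sub (memLp_comp P hm hg)]
  have h1 : (fun ω => (X ω) ^ 2 - 1) ^ 2 = fun ω => ((X ω) ^ 2 - 1) ^ 2 := rfl
  rw [h1]
  have h2 : ∫ ω, ((X ω) ^ 2 - 1) ^ 2 ∂P = 2 := by
    rw [integral_comp_eq P hm hg (fun x => (x ^ 2 - 1) ^ 2)
      (((measurable_id.pow_const 2).sub measurable_const).pow_const 2)]
    exact integral_sqm1_sq
  have h3 := E_comp_zero P hm hg
  rw [h2]
  rw [show (∫ ω, ((X ω) ^ 2 - 1) ∂P) = 0 from h3]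
  norm_num

lemma lint_sq_one (hm : Measurable X) (hg : P.map X = gaussianReal 0 1) : ∫⁻ ω, ENNReal.ofReal ((X ω) ^ 2) ∂P = 1 := by
  have h1 : ∫⁻ ω, ENNReal.ofReal ((X ω) ^ 2) ∂P
      = ∫⁻ x, ENNReal.ofReal (x ^ 2) ∂(gaussianReal 0 1) := by
    rw [← hg, lintegral_map (by exact measurable_id.pow_const 2 |>.ennreal_ofReal) hm]
  rw [h1, ← ofReal_integral_eq_lintegral_ofReal (integrable_pow_gauss 2)
    (Filter.Eventually.of_forall fun x => sq_nonneg x), moment2, ENNReal.ofReal_one]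

end RV

lemma gauss_pos_of_open {s : Set ℝ} (hs : IsOpen s) (hne : s.Nonempty) :
    0 < gaussianReal 0 1 s := by
  by_contra h
  push_neg at h
  have h0 : gaussianReal 0 1 s = 0 := le_antisymm h zero_le
  have := gaussianReal_absolutelyContinuous' 0 (one_ne_zero) h0
  exact (hs.measure_pos volume hne).ne' this








end Stmt14Aux

open MeasureTheory ProbabilityTheory

/-- Small-ball estimate for Gaussian quadratic forms: under the
standard Gaussian measure (identity covariance, encoded by an i.i.d. standard normal
sequence `X j`), for any `κ, ε > 0` there is `p(κ,ε) > 0` such that for every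
self-adjoint trace class `M` with `‖M‖₁ ≤ κ` (encoded by its eigenvalue sequence
`lam` with `∑ |lam j| ≤ κ`, so that `(x,Mx) − tr M = ∑ lam j (x_j² − 1)`),
`μ({x : |(x,Mx) − tr M| < ε}) ≥ p(κ,ε)`. -/
theorem stmt14 {Ω : Type*} [MeasurableSpace Ω] (P : Measure Ω) [IsProbabilityMeasure P]
    (X : ℕ → Ω → ℝ) (hmeas : ∀ j, Measurable (X j))
    (hindep : iIndepFun X P)
    (hgauss : ∀ j, P.map (X j) = gaussianReal 0 1)
    (κ ε : ℝ) (hκ : 0 < κ) (hε : 0 < ε) :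
    ∃ p > 0, ∀ lam : ℕ → ℝ, Summable (fun j => |lam j|) → (∑' j, |lam j|) ≤ κ →
      ENNReal.ofReal p ≤ P {ω | |∑' j, lam j * ((X j ω) ^ 2 - 1)| < ε} := by
  classical
  set η : ℝ := ε / (4 * κ) with hη_def
  have hη : 0 < η := by positivity
  set δ : ℝ := ε ^ 2 / (32 * κ) with hδ_def
  have hδ : 0 < δ := by positivity
  set N : ℕ := ⌈κ / δ⌉₊ with hN_def
  set s : Set ℝ := {x : ℝ | |x ^ 2 - 1| < η} with hs_def
  have hs_meas : MeasurableSet s :=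
    measurableSet_lt (((measurable_id.pow_const 2).sub_const 1).abs) measurable_const
  have hs_open : IsOpen s := by
    have : Continuous fun x : ℝ => |x ^ 2 - 1| := ((continuous_pow 2).sub continuous_const).abs
    exact isOpen_lt this continuous_const
  have hq_pos : 0 < gaussianReal 0 1 s :=
    gauss_pos_of_open hs_open ⟨1, by simp [hs_def, hη]⟩
  set q : ℝ≥0∞ := gaussianReal 0 1 s with hq_def
  have hq_ne_top : q ≠ ∞ := measure_ne_top _ _
  set qr : ℝ := q.toReal with hqr_def
  have hqr_pos : 0 < qr := ENNReal.toReal_pos hq_pos.ne' hq_ne_top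
  have hqr_le1 : qr ≤ 1 := by
    rw [hqr_def]
    exact ENNReal.toReal_le_of_le_ofReal one_pos.le (by simpa using prob_le_one (μ := gaussianReal 0 1) (s := s))
  refine ⟨qr ^ N * (1/2), by positivity, ?_⟩
  intro lam hsum hκsum
  have hlamnn : ∀ j, 0 ≤ |lam j| := fun j => abs_nonneg _
  -- the finite set of large eigenvalues
  have hfin : {j : ℕ | δ ≤ |lam j|}.Finite := by
    have h2 : ∀ᶠ j in Filter.cofinite, |lam j| < δ :=
      hsum.tendsto_cofinite_zero.eventually_lt_const hδ
    rw [Filter.eventually_cofinite] at h2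
    exact h2.subset (fun j hj => by simpa using hj)
  set J : Finset ℕ := hfin.toFinset with hJ_def
  have hJ : ∀ j, j ∈ J ↔ δ ≤ |lam j| := fun j => hfin.mem_toFinset
  have hsumJ : ∑ j ∈ J, |lam j| ≤ κ :=
    le_trans (Summable.sum_le_tsum J (fun j _ => hlamnn j) hsum) hκsum
  have hcard : (J.card : ℝ) * δ ≤ κ := by
    have h1 : J.card • δ ≤ ∑ j ∈ J, |lam j| :=
      Finset.card_nsmul_le_sum J _ δ (fun j hj => (hJ j).1 hj)
    rw [nsmul_eq_mul] at h1
    exact h1.trans hsumJ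
  have hcardN : J.card ≤ N := by
    have h1 : (J.card : ℝ) ≤ κ / δ := (le_div_iff₀ hδ).mpr hcard
    have h2 : (J.card : ℝ) ≤ (N : ℝ) := h1.trans (Nat.le_ceil _)
    exact_mod_cast h2
  -- events
  set A : Set Ω := ⋂ j ∈ J, X j ⁻¹' s with hA_def
  have hA_meas : MeasurableSet A :=
    MeasurableSet.biInter (Set.to_countable _) (fun j _ => (hmeas j) hs_meas)
  have hPA : P A = q ^ J.card := by
    rw [hA_def, hindep.meas_biInter (fun j _ => ⟨s, hs_meas, rfl⟩)]
    rw [Finset.prod_congr rfl (fun j _ => ?_), Finset.prod_const]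
    rw [← Measure.map_apply (hmeas j) hs_meas, hgauss j]
  -- the truncated variables
  set Y : ℕ → Ω → ℝ := fun j ω => if j ∈ J then 0 else lam j * ((X j ω) ^ 2 - 1)
    with hY_def
  have hYmeas : ∀ j, Measurable (Y j) := by
    intro j
    by_cases hj : j ∈ J <;> simp only [hY_def, hj, if_true, if_false]
    · exact measurable_const
    · exact (((hmeas j).pow_const 2).sub_const 1).const_mul (lam j)
  have hY2 : ∀ j, MemLp (Y j) 2 P := by
    intro j
    by_cases hj : j ∈ J <;> simp only [hY_def, hj, if_true, if_false]
    · exact memLp_const 0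
    · exact (memLp_comp P (hmeas j) (hgauss j)).const_mul (lam j)
  have hYvar : ∀ j, variance (Y j) P ≤ 2 * δ * |lam j| := by
    intro j
    by_cases hj : j ∈ J <;> simp only [hY_def, hj, if_true, if_false]
    · have h0 : variance (fun _ : Ω => (0:ℝ)) P = 0 := variance_zero P
      rw [h0]
      positivity
    · have h1 : variance (fun ω => lam j * ((X j ω) ^ 2 - 1)) P
          = lam j ^ 2 * variance (fun ω => (X j ω) ^ 2 - 1) P :=
        variance_const_mul (lam j) _ P
      rw [h1, var_comp P (hmeas j) (hgauss j)]
      have h2 : |lam j| < δ := by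
        by_contra h3
        exact hj ((hJ j).2 (not_lt.1 h3))
      nlinarith [abs_nonneg (lam j), sq_abs (lam j)]
  have hYint : ∀ j, Integrable (Y j) P := fun j => (hY2 j).integrable one_le_two
  have hYE : ∀ j, ∫ ω, Y j ω ∂P = 0 := by
    intro j
    by_cases hj : j ∈ J <;> simp only [hY_def, hj, if_true, if_false]
    · simp
    · rw [integral_const_mul, E_comp_zero P (hmeas j) (hgauss j), mul_zero]
  -- partial sums
  set S : ℕ → Ω → ℝ := fun n ω => ∑ j ∈ Finset.range n, Y j ω with hS_def
  have hSfun : ∀ n, S n = ∑ j ∈ Finset.range n, Y j := by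
    intro n; ext ω; simp [hS_def]
  have hSmeas : ∀ n, Measurable (S n) := fun n =>
    Finset.measurable_sum _ (fun j _ => hYmeas j)
  have hS2 : ∀ n, MemLp (S n) 2 P := by
    intro n
    rw [hSfun n]
    exact memLp_finset_sum' _ (fun j _ => hY2 j)
  have hSE : ∀ n, ∫ ω, S n ω ∂P = 0 := by
    intro n
    rw [integral_finset_sum _ (fun j _ => hYint j)]
    exact Finset.sum_eq_zero (fun j _ => hYE j)
  have hYpair : ∀ i j : ℕ, i ≠ j → IndepFun (Y i) (Y j) P := by
    intro i j hij
    have hcomp := hindep.comp (fun j x => if j ∈ J then 0 else lam j * (x ^ 2 - 1))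
      (fun j => by
        by_cases hj : j ∈ J <;> simp only [hj, if_true, if_false]
        · exact measurable_const
        · exact (((measurable_id.pow_const 2)).sub_const 1).const_mul (lam j))
    exact hcomp.indepFun hij
  have hSvar : ∀ n, variance (S n) P ≤ ε ^ 2 / 16 := by
    intro n
    rw [hSfun n, IndepFun.variance_sum (fun j _ => hY2 j)
      (fun i _ j _ hij => hYpair i j hij)]
    calc ∑ j ∈ Finset.range n, variance (Y j) P
        ≤ ∑ j ∈ Finset.range n, 2 * δ * |lam j| :=
          Finset.sum_le_sum (fun j _ => hYvar j)
      _ = 2 * δ * ∑ j ∈ Finset.range n, |lam j| := by rw [Finset.mul_sum]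
      _ ≤ 2 * δ * κ := by
          have h1 : ∑ j ∈ Finset.range n, |lam j| ≤ κ :=
            le_trans (Summable.sum_le_tsum _ (fun j _ => hlamnn j) hsum) hκsum
          have h2 : (0:ℝ) ≤ 2 * δ := by positivity
          nlinarith
      _ = ε ^ 2 / 16 := by rw [hδ_def]; field_simp; ring
  have hCheb : ∀ n, P {ω | ε/2 ≤ |S n ω|} ≤ ENNReal.ofReal (1/4) := by
    intro n
    have h := meas_ge_le_variance_div_sq (hS2 n) (show 0 < ε/2 by positivity)
    have hE : ∫ ω, S n ω ∂P = 0 := hSE n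
    simp only [hE, sub_zero] at h
    refine h.trans (ENNReal.ofReal_le_ofReal ?_)
    rw [div_le_iff₀ (by positivity : (0:ℝ) < (ε/2)^2)]
    have := hSvar n
    nlinarith
  set B : ℕ → Set Ω := fun n => {ω | |S n ω| < ε/2} with hB_def
  have hB_meas : ∀ n, MeasurableSet (B n) := fun n =>
    measurableSet_lt ((hSmeas n).abs) measurable_const
  have hPB : ∀ n, ENNReal.ofReal (1/2) ≤ P (B n) := by
    intro n
    have hc : B n = {ω | ε/2 ≤ |S n ω|}ᶜ := by
      ext ω; simp [hB_def, not_le]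
    rw [hc, prob_compl_eq_one_sub
      (measurableSet_le measurable_const ((hSmeas n).abs))]
    have h3 : ENNReal.ofReal (1/2) ≤ 1 - ENNReal.ofReal (1/4) := by
      rw [show (1:ℝ≥0∞) = ENNReal.ofReal 1 by simp,
        ← ENNReal.ofReal_sub _ (by norm_num : (0:ℝ) ≤ 1/4)]
      exact ENNReal.ofReal_le_ofReal (by norm_num)
    exact h3.trans (tsub_le_tsub_left (hCheb n) 1)
  -- independence of A and B n
  have hS_alt : ∀ n ω, S n ω = ∑ j ∈ Finset.range n \ J, lam j * ((X j ω) ^ 2 - 1) := by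
    intro n ω
    rw [Finset.sdiff_eq_filter, Finset.sum_filter]
    refine Finset.sum_congr rfl (fun j _ => ?_)
    by_cases hj : j ∈ J <;> simp [hS_def, hY_def, hj]
  have hPAB : ∀ n, P (A ∩ B n) = P A * P (B n) := by
    intro n
    set T : Finset ℕ := Finset.range n \ J with hT_def
    have hdisj : Disjoint J T := Finset.sdiff_disjoint.symm
    have hIF := hindep.indepFun_finset J T hdisj hmeas
    have hA_pre : A = (fun a (i : J) => X (↑i) a) ⁻¹'
        {v : J → ℝ | ∀ i : J, |v i ^ 2 - 1| < η} := by
      ext ω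
      simp [hA_def, hs_def, Set.mem_iInter, Subtype.forall]
    have hB_pre : B n = (fun a (i : T) => X (↑i) a) ⁻¹'
        {v : T → ℝ | |∑ i : T, lam (↑i) * (v i ^ 2 - 1)| < ε/2} := by
      ext ω
      have h1 : S n ω = ∑ i : T, lam (↑i) * ((X (↑i) ω) ^ 2 - 1) := by
        rw [hS_alt n ω, ← hT_def, ← Finset.sum_coe_sort]
      simp only [hB_def, Set.mem_setOf_eq, Set.mem_preimage, h1]
    have hSA_meas : MeasurableSet {v : J → ℝ | ∀ i : J, |v i ^ 2 - 1| < η} := by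
      rw [Set.setOf_forall]
      exact MeasurableSet.iInter (fun i => measurableSet_lt
        (((measurable_pi_apply i).pow_const 2).sub_const 1).abs measurable_const)
    have hSB_meas : MeasurableSet
        {v : T → ℝ | |∑ i : T, lam (↑i) * (v i ^ 2 - 1)| < ε/2} := by
      refine measurableSet_lt (Measurable.abs ?_) measurable_const
      exact Finset.measurable_sum Finset.univ (fun i _ => by fun_prop)
    rw [hA_pre, hB_pre]
    exact hIF.measure_inter_preimage_eq_mul _ _ hSA_meas hSB_meas
  -- the decreasing events
  set D : ℕ → Set Ω := fun m => ⋃ n, ⋃ (_ : m ≤ n), (A ∩ B n) with hD_def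
  have hD_meas : ∀ m, MeasurableSet (D m) := fun m =>
    MeasurableSet.iUnion (fun n => MeasurableSet.iUnion
      (fun _ => hA_meas.inter (hB_meas n)))
  have hD_anti : Antitone D := by
    intro m m' hmm'
    simp only [hD_def]
    exact Set.iUnion₂_subset (fun n hn => Set.subset_iUnion₂ (s := fun n (_ : m ≤ n) => A ∩ B n) n (hmm'.trans hn))
  have hlow : ∀ m, ENNReal.ofReal (qr ^ N * (1/2)) ≤ P (D m) := by
    intro m
    have h1 : P (A ∩ B m) ≤ P (D m) := by
      refine measure_mono ?_
      simp only [hD_def]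
      exact Set.subset_iUnion₂ (s := fun n (_ : m ≤ n) => A ∩ B n) m le_rfl
    refine le_trans ?_ h1
    rw [hPAB m, hPA]
    have h2 : ENNReal.ofReal (qr ^ N) ≤ q ^ J.card := by
      have h3 : qr ^ N ≤ qr ^ J.card :=
        pow_le_pow_of_le_one hqr_pos.le hqr_le1 hcardN
      calc ENNReal.ofReal (qr ^ N) ≤ ENNReal.ofReal (qr ^ J.card) :=
            ENNReal.ofReal_le_ofReal h3
        _ = (ENNReal.ofReal qr) ^ J.card := ENNReal.ofReal_pow hqr_pos.le _
        _ = q ^ J.card := by rw [hqr_def, ENNReal.ofReal_toReal hq_ne_top]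
    rw [ENNReal.ofReal_mul (by positivity)]
    exact mul_le_mul' h2 (hPB m)
  have hiInter : ENNReal.ofReal (qr ^ N * (1/2)) ≤ P (⋂ m, D m) := by
    have ht := tendsto_measure_iInter_atTop (μ := P)
      (fun m => (hD_meas m).nullMeasurableSet) hD_anti ⟨0, measure_ne_top P _⟩
    exact ge_of_tendsto ht (Filter.Eventually.of_forall hlow)
  -- almost sure summability
  set SΩ : Set Ω := {ω | Summable (fun j => lam j * ((X j ω) ^ 2 - 1))} with hSΩ_def
  have hSnull : P SΩᶜ = 0 := by
    set F : ℕ → Ω → ℝ≥0∞ := fun j ω => ENNReal.ofReal (|lam j| * ((X j ω) ^ 2 + 1))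
      with hF_def
    have hFmeas : ∀ j, Measurable (F j) := fun j =>
      ((((hmeas j).pow_const 2).add_const 1).const_mul |lam j|).ennreal_ofReal
    have heach : ∀ j, ∫⁻ ω, F j ω ∂P = ENNReal.ofReal |lam j| * 2 := by
      intro j
      have h1 : ∀ ω, F j ω
          = ENNReal.ofReal |lam j| * (ENNReal.ofReal ((X j ω) ^ 2) + 1) := by
        intro ω
        simp only [hF_def]
        rw [ENNReal.ofReal_mul (abs_nonneg _),
          ENNReal.ofReal_add (sq_nonneg _) zero_le_one, ENNReal.ofReal_one]
      calc ∫⁻ ω, F j ω ∂P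
          = ∫⁻ ω, ENNReal.ofReal |lam j| * (ENNReal.ofReal ((X j ω) ^ 2) + 1) ∂P := by
            exact lintegral_congr (fun ω => h1 ω)
        _ = ENNReal.ofReal |lam j|
            * ∫⁻ ω, (ENNReal.ofReal ((X j ω) ^ 2) + 1) ∂P := by
            rw [lintegral_const_mul _ (show Measurable fun ω => ENNReal.ofReal ((X j ω) ^ 2) + 1
              from ((hmeas j).pow_const 2).ennreal_ofReal.add measurable_const)]
        _ = ENNReal.ofReal |lam j| * 2 := by
            rw [lintegral_add_right _ measurable_const,
              lint_sq_one P (hmeas j) (hgauss j)]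
            simp [one_add_one_eq_two]
    have hlint : ∫⁻ ω, ∑' j, F j ω ∂P ≠ ∞ := by
      rw [lintegral_tsum (fun j => (hFmeas j).aemeasurable)]
      rw [tsum_congr heach, ENNReal.tsum_mul_right]
      have h4 : ∑' j, ENNReal.ofReal |lam j| = ENNReal.ofReal (∑' j, |lam j|) :=
        (ENNReal.ofReal_tsum_of_nonneg hlamnn hsum).symm
      rw [h4]
      exact ENNReal.mul_ne_top ENNReal.ofReal_ne_top (by norm_num)
    have hae := ae_lt_top (Measurable.ennreal_tsum hFmeas) hlint
    have hsub : ∀ ω, (∑' j, F j ω) < ∞ → ω ∈ SΩ := by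
      intro ω hω
      have h1 : Summable (fun j => (F j ω).toReal) := ENNReal.summable_toReal hω.ne
      have h2 : Summable (fun j => |lam j| * ((X j ω) ^ 2 + 1)) := by
        refine h1.congr (fun j => ?_)
        simp only [hF_def]
        rw [ENNReal.toReal_ofReal (by positivity)]
      refine Summable.of_abs ?_
      refine Summable.of_nonneg_of_le (fun j => abs_nonneg _) (fun j => ?_) h2
      rw [abs_mul]
      refine mul_le_mul_of_nonneg_left ?_ (abs_nonneg _)
      calc |(X j ω) ^ 2 - 1| ≤ |(X j ω) ^ 2| + |(1:ℝ)| := abs_sub _ _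
        _ = (X j ω) ^ 2 + 1 := by rw [abs_of_nonneg (sq_nonneg _), abs_one]
    have : ∀ᵐ ω ∂P, ω ∈ SΩ := hae.mono (fun ω hω => hsub ω hω)
    exact this
  -- conclusion
  have hincl : (⋂ m, D m) ∩ SΩ ⊆ {ω | |∑' j, lam j * ((X j ω) ^ 2 - 1)| < ε} := by
    rintro ω ⟨hDω, hSω⟩
    have hDm : ∀ m, ∃ n, m ≤ n ∧ ω ∈ A ∩ B n := by
      intro m
      have h0 := Set.mem_iInter.mp hDω m
      have h1 : ω ∈ A ∧ ∃ x, m ≤ x ∧ ω ∈ B x := by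
        simpa [hD_def, Set.mem_iUnion] using h0
      obtain ⟨ha, x, hx, hb⟩ := h1
      exact ⟨x, hx, ha, hb⟩
    have hAω : ω ∈ A := (hDm 0).choose_spec.2.1
    have hfreq : ∀ m, ∃ n, m ≤ n ∧ |S n ω| < ε/2 := by
      intro m
      obtain ⟨n, hn, _, hb⟩ := hDm m
      exact ⟨n, hn, hb⟩
    set g : ℕ → ℝ := fun j => lam j * ((X j ω) ^ 2 - 1) with hg_def
    have hgsum : Summable g := hSω
    set gJ : ℕ → ℝ := fun j => if j ∈ J then g j else 0 with hgJ_def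
    set gT : ℕ → ℝ := fun j => if j ∈ J then 0 else g j with hgT_def
    have hgJsum : Summable gJ :=
      summable_of_ne_finset_zero (s := J) (fun j hj => if_neg hj)
    have hgTsum : Summable gT := by
      have he : gT = fun j => g j - gJ j := by
        ext j; by_cases hj : j ∈ J <;> simp [hgT_def, hgJ_def, hj]
      rw [he]
      exact hgsum.sub hgJsum
    have hsplit : ∑' j, g j = (∑' j, gJ j) + ∑' j, gT j := by
      rw [← Summable.tsum_add hgJsum hgTsum]
      refine tsum_congr (fun j => ?_)
      by_cases hj : j ∈ J <;> simp [hgJ_def, hgT_def, hj]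
    have hJt : ∑' j, gJ j = ∑ j ∈ J, g j := by
      rw [tsum_eq_sum (s := J) (fun j hj => if_neg hj)]
      exact Finset.sum_congr rfl (fun j hj => if_pos hj)
    have hbound1 : |∑' j, gJ j| ≤ ε/4 := by
      rw [hJt]
      calc |∑ j ∈ J, g j| ≤ ∑ j ∈ J, |g j| := Finset.abs_sum_le_sum_abs _ _
        _ ≤ ∑ j ∈ J, |lam j| * η := by
            refine Finset.sum_le_sum (fun j hj => ?_)
            rw [hg_def, abs_mul]
            refine mul_le_mul_of_nonneg_left ?_ (abs_nonneg _)
            have hmem : ω ∈ X j ⁻¹' s := by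
              have := Set.mem_iInter₂.mp hAω j hj
              exact this
            exact le_of_lt hmem
        _ = (∑ j ∈ J, |lam j|) * η := by rw [Finset.sum_mul]
        _ ≤ κ * η := mul_le_mul_of_nonneg_right hsumJ hη.le
        _ = ε/4 := by rw [hη_def]; field_simp
    have hbound2 : |∑' j, gT j| ≤ ε/2 := by
      have hSn : ∀ n, ∑ j ∈ Finset.range n, gT j = S n ω := by
        intro n
        exact Finset.sum_congr rfl (fun j _ => rfl)
      have htds : Filter.Tendsto (fun n => ∑ j ∈ Finset.range n, gT j)
          Filter.atTop (nhds (∑' j, gT j)) := hgTsum.hasSum.tendsto_sum_nat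
      by_contra hc
      push_neg at hc
      have hev : ∀ᶠ n in Filter.atTop, ε/2 < |∑ j ∈ Finset.range n, gT j| :=
        (htds.abs).eventually (eventually_gt_nhds hc)
      obtain ⟨m, hm⟩ := Filter.eventually_atTop.mp hev
      obtain ⟨n, hn, hlt⟩ := hfreq m
      have := hm n hn
      rw [hSn n] at this
      linarith
    show |∑' j, lam j * ((X j ω) ^ 2 - 1)| < ε
    have : |∑' j, g j| < ε := by
      rw [hsplit]
      calc |(∑' j, gJ j) + ∑' j, gT j| ≤ |∑' j, gJ j| + |∑' j, gT j| := abs_add_le _ _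
        _ ≤ ε/4 + ε/2 := add_le_add hbound1 hbound2
        _ < ε := by linarith
    exact this
  calc ENNReal.ofReal (qr ^ N * (1/2)) ≤ P (⋂ m, D m) := hiInter
    _ = P ((⋂ m, D m) ∩ SΩ) := (measure_inter_conull hSnull).symm
    _ ≤ P {ω | |∑' j, lam j * ((X j ω) ^ 2 - 1)| < ε} := measure_mono hincl
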